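/- Let A be a self-adjoint operator with domain D(A) on a Hilbert space H, and let U and V be unitary operators on H of class C¹(A) with commutators B_U = ad_A U and B_V = ad_A V. Suppose that U*V − I is compact and that the bounded operator −B_U*V + U*B_V (which equals ad_A(U*V)) is compact. Then U*B_U − V*B_V is compact, i.e. (U*AU − A)° − (V*AV − A)° is compact. -/

import Mathlib

open scoped ComplexInnerProductSpace

section Aux

variable {H : Type*} [NormedAddCommGroup H] [InnerProductSpace ℂ H] [CompleteSpace H]

/-- If `U` is of class `C¹(A)` with commutator `BU`, and `A` is self-adjoint, then `U` maps
the domain of `A` into itself, with `A (U ψ) = U (A ψ) + BU ψ`. -/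
theorem aux_dom_invariance
    (A : H →ₗ.[ℂ] H) (hdense : Dense (A.domain : Set H)) (hsa : A.adjoint = A)
    (U BU : H →L[ℂ] H)
    (hCU : ∀ φ ψ : A.domain,
      ⟪A φ, U (ψ : H)⟫ - ⟪(φ : H), U (A ψ)⟫ = ⟪(φ : H), BU (ψ : H)⟫)
    (ψ : A.domain) :
    ∃ h : U (ψ : H) ∈ A.domain, A ⟨U (ψ : H), h⟩ = U (A ψ) + BU (ψ : H) := by
  have hw : ∀ x : A.domain, ⟪U (A ψ) + BU (ψ : H), (x : H)⟫ = ⟪U (ψ : H), A x⟫ := by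
    intro x
    have h := hCU x ψ
    have h' : ⟪A x, U (ψ : H)⟫ = ⟪(x : H), U (A ψ)⟫ + ⟪(x : H), BU (ψ : H)⟫ := by
      rw [← h]; ring
    calc ⟪U (A ψ) + BU (ψ : H), (x : H)⟫
        = ⟪U (A ψ), (x : H)⟫ + ⟪BU (ψ : H), (x : H)⟫ := inner_add_left _ _ _
      _ = starRingEnd ℂ (⟪(x : H), U (A ψ)⟫ + ⟪(x : H), BU (ψ : H)⟫) := by
          rw [map_add, inner_conj_symm, inner_conj_symm]
      _ = starRingEnd ℂ ⟪A x, U (ψ : H)⟫ := by rw [h']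
      _ = ⟪U (ψ : H), A x⟫ := inner_conj_symm _ _
  have hmem : U (ψ : H) ∈ A.adjoint.domain :=
    LinearPMap.mem_adjoint_domain_of_exists _ ⟨U (A ψ) + BU (ψ : H), hw⟩
  have hval : A.adjoint ⟨U (ψ : H), hmem⟩ = U (A ψ) + BU (ψ : H) :=
    LinearPMap.adjoint_apply_eq hdense _ hw
  have hd : A.adjoint.domain = A.domain := congrArg LinearPMap.domain hsa
  have hmem' : U (ψ : H) ∈ A.domain := (SetLike.ext_iff.mp hd _).mp hmem
  refine ⟨hmem', ?_⟩
  obtain ⟨-, happ⟩ := LinearPMap.ext_iff.mp hsa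
  rw [← happ (x := U (ψ : H)) (hf := hmem) (hg := hmem')]
  exact hval

end Aux

/-- Second part of Lemma 4.8 ("prop-compact"): for unitaries `U, V ∈ C¹(A)` with
commutators `B_U = ad_A U`, `B_V = ad_A V`, if `U*V − I` is compact and
`ad_A(U*V) = −B_U* V + U* B_V` is compact, then
`(U*AU − A)° − (V*AV − A)° = U* B_U − V* B_V` is compact. -/
theorem stmt13
    {H : Type*} [NormedAddCommGroup H] [InnerProductSpace ℂ H] [CompleteSpace H]
    -- A self-adjoint (densely defined) operator on H
    (A : H →ₗ.[ℂ] H) (hdense : Dense (A.domain : Set H)) (hsa : A.adjoint = A)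
    -- unitary operators U and V of class C¹(A) with commutators BU, BV
    (U V BU BV : H →L[ℂ] H)
    (hU : U ∈ unitary (H →L[ℂ] H)) (hV : V ∈ unitary (H →L[ℂ] H))
    (hCU : ∀ φ ψ : A.domain,
      ⟪A φ, U (ψ : H)⟫ - ⟪(φ : H), U (A ψ)⟫ = ⟪(φ : H), BU (ψ : H)⟫)
    (hCV : ∀ φ ψ : A.domain,
      ⟪A φ, V (ψ : H)⟫ - ⟪(φ : H), V (A ψ)⟫ = ⟪(φ : H), BV (ψ : H)⟫)
    -- U*V − I is compact
    (hUV : IsCompactOperator ⇑(star U * V - 1))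
    -- ad_A (U*V) = −B_U* V + U* B_V is compact
    (hcomp : IsCompactOperator ⇑(-(star BU) * V + star U * BV)) :
    IsCompactOperator ⇑(star U * BU - star V * BV) := by
  obtain ⟨hU1, hU2⟩ := Unitary.mem_iff.mp hU
  obtain ⟨hV1, hV2⟩ := Unitary.mem_iff.mp hV
  -- symmetry of A
  have hFA : A.IsFormalAdjoint A := by
    have h := LinearPMap.adjoint_isFormalAdjoint (T := A) hdense
    rwa [hsa] at h
  -- domain invariance
  have keyU := aux_dom_invariance A hdense hsa U BU hCU
  -- U preserves inner products
  have hUinner : ∀ x y : H, ⟪U x, U y⟫ = ⟪x, y⟫ := by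
    intro x y
    have h := congrArg (fun W : H →L[ℂ] H => ⟪x, W y⟫) hU1
    simpa [ContinuousLinearMap.mul_apply, ContinuousLinearMap.star_eq_adjoint,
      ContinuousLinearMap.adjoint_inner_right] using h
  -- self-adjointness of S := U* BU
  have hext : star BU * U = star U * BU := by
    have hinner : ∀ φ ψ : A.domain,
        ⟪(φ : H), (star BU * U - star U * BU) (ψ : H)⟫ = 0 := by
      intro φ ψ
      obtain ⟨hψm, hψv⟩ := keyU ψ
      obtain ⟨hφm, hφv⟩ := keyU φ
      have h1 : ⟪(φ : H), (star U * BU) (ψ : H)⟫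
          = ⟪U (φ : H), A ⟨U (ψ : H), hψm⟩⟫ - ⟪A φ, (ψ : H)⟫ := by
        rw [ContinuousLinearMap.mul_apply, ContinuousLinearMap.star_eq_adjoint,
          ContinuousLinearMap.adjoint_inner_right]
        have : BU (ψ : H) = A ⟨U (ψ : H), hψm⟩ - U (A ψ) := by rw [hψv]; abel
        rw [this, inner_sub_right, hUinner]
        rw [hFA φ ψ]
      have h2 : ⟪(φ : H), (star BU * U) (ψ : H)⟫
          = ⟪A ⟨U (φ : H), hφm⟩, U (ψ : H)⟫ - ⟪A φ, (ψ : H)⟫ := by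
        rw [ContinuousLinearMap.mul_apply, ContinuousLinearMap.star_eq_adjoint,
          ContinuousLinearMap.adjoint_inner_right]
        have : BU (φ : H) = A ⟨U (φ : H), hφm⟩ - U (A φ) := by rw [hφv]; abel
        rw [this, inner_sub_left, hUinner]
      have h3 : ⟪A ⟨U (φ : H), hφm⟩, U (ψ : H)⟫ = ⟪U (φ : H), A ⟨U (ψ : H), hψm⟩⟫ :=
        hFA ⟨U (φ : H), hφm⟩ ⟨U (ψ : H), hψm⟩
      rw [ContinuousLinearMap.sub_apply, inner_sub_right, h1, h2, h3]
      ring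
    have hzero : ∀ ψ : A.domain, (star BU * U - star U * BU) (ψ : H) = 0 := by
      intro ψ
      set w := (star BU * U - star U * BU) (ψ : H) with hwdef
      have hc : Continuous fun x : H => ⟪x, w⟫ :=
        Continuous.inner continuous_id continuous_const
      have hsub : (A.domain : Set H) ⊆ {x : H | ⟪x, w⟫ = (0 : ℂ)} := by
        intro x hx
        exact hinner ⟨x, hx⟩ ψ
      have hall : ∀ x : H, ⟪x, w⟫ = (0 : ℂ) := by
        intro x
        have hx : x ∈ closure (A.domain : Set H) := hdense x
        exact ((isClosed_eq hc continuous_const).closure_subset_iff.mpr hsub) hx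
      exact inner_self_eq_zero.mp (hall w)
    have hfun : ⇑(star BU * U - star U * BU) = fun _ : H => (0 : H) := by
      refine Continuous.ext_on hdense (map_continuous _) continuous_const ?_
      intro x hx
      exact hzero ⟨x, hx⟩
    have : star BU * U - star U * BU = 0 := by
      ext x
      exact congrFun hfun x
    exact sub_eq_zero.mp this
  -- hence U * BU* = BU * U*
  have hS' : U * star BU = BU * star U := by
    calc U * star BU = U * star BU * (U * star U) := by rw [hU2, mul_one]
      _ = U * ((star BU * U) * star U) := by simp only [mul_assoc]
      _ = U * ((star U * BU) * star U) := by rw [hext]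
      _ = (U * star U) * (BU * star U) := by simp only [mul_assoc]
      _ = BU * star U := by rw [hU2, one_mul]
  -- notation
  set S : H →L[ℂ] H := star U * BU with hSdef
  set K1 : H →L[ℂ] H := star U * V - 1 with hK1def
  set K2 : H →L[ℂ] H := -(star BU) * V + star U * BV with hK2def
  set W : H →L[ℂ] H := star U * V with hWdef
  -- S * W + K2 = U* B_V
  have e1 : S * W = star BU * V := by
    rw [hSdef, hWdef]
    calc star U * BU * (star U * V) = star U * ((BU * star U) * V) := by
          simp only [mul_assoc]
      _ = star U * ((U * star BU) * V) := by rw [hS']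
      _ = (star U * U) * (star BU * V) := by simp only [mul_assoc]
      _ = star BU * V := by rw [hU1, one_mul]
  have hA1 : S * W + K2 = star U * BV := by
    rw [e1, hK2def]; noncomm_ring
  -- V* B_V = W* (S W) + W* K2
  have e3 : star W * (star U * BV) = star V * BV := by
    rw [hWdef, star_mul, star_star]
    calc star V * U * (star U * BV)
        = star V * ((U * star U) * BV) := by simp only [mul_assoc]
      _ = star V * BV := by rw [hU2, one_mul]
  have h1 : star V * BV = star W * (S * W) + star W * K2 := by
    have h := congrArg (fun X : H →L[ℂ] H => star W * X) hA1
    simp only [mul_add] at h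
    rw [← e3]
    exact h.symm
  -- expand W = 1 + K1
  have hW1 : W = K1 + 1 := by rw [hK1def]; noncomm_ring
  have hWs : star W = star K1 + 1 := by rw [hW1, star_add, star_one]
  have h2 : star W * (S * W) = S + (star K1 * (S * W) + S * K1) := by
    calc star W * (S * W) = (star K1 + 1) * (S * W) := by rw [hWs]
      _ = star K1 * (S * W) + S * W := by noncomm_ring
      _ = star K1 * (S * W) + S * (K1 + 1) := by rw [← hW1]
      _ = S + (star K1 * (S * W) + S * K1) := by noncomm_ring
  -- the operator identity
  have hfin : S - star V * BV = -(star K1 * (S * W)) - S * K1 - star W * K2 := by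
    rw [h1, h2]; noncomm_ring
  rw [hfin]
  -- compactness
  have hK1c : IsCompactOperator ⇑K1 := hUV
  have hK2c : IsCompactOperator ⇑K2 := hcomp
  -- star K1 = -(star W * K1)
  have hK1W : K1 = W - 1 := by rw [hWdef]
  have hWunit : star W * W = 1 := by
    rw [hWdef, star_mul, star_star]
    calc star V * U * (star U * V) = star V * ((U * star U) * V) := by
          simp only [mul_assoc]
      _ = star V * V := by rw [hU2, one_mul]
      _ = 1 := hV1
  have hstK1 : star K1 = -(star W * K1) := by
    have h2 : star W * K1 = 1 - star W := by
      rw [hK1W, mul_sub, mul_one, hWunit]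
    rw [h2, hK1W, star_sub, star_one]
    noncomm_ring
  have c1 : IsCompactOperator ⇑(star K1 * (S * W)) := by
    rw [hstK1, show -(star W * K1) * (S * W) = -(star W * (K1 * (S * W))) from by
      noncomm_ring]
    have cb : IsCompactOperator ⇑(K1 * (S * W)) := hK1c.comp_clm (S * W)
    have cc : IsCompactOperator ⇑(star W * (K1 * (S * W))) :=
      cb.continuous_comp (star W).continuous
    exact cc.neg
  have c2 : IsCompactOperator ⇑(S * K1) := hK1c.continuous_comp S.continuous
  have c3 : IsCompactOperator ⇑(star W * K2) := hK2c.continuous_comp (star W).continuous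
  exact (c1.neg.sub c2).sub c3
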